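/- Let G be a countable discrete sofic group with a fixed sofic approximation σ_i : G → Sym({1,…,d_i}), let X be a compact metrizable space with a continuous G-action by homeomorphisms, let ρ be a dynamically generating continuous pseudometric on X, let μ be a G-invariant Borel probability measure on X, and let Ψ : X → X^G be Ψ(x)(g) = g^{-1}·x. Then for every finite F ⊆ G, finite L ⊆ C(X) and δ > 0, there exist a weak* open neighborhood O of Ψ_*μ in Prob(X^G) and an I ∈ ℕ such that for all i ≥ I, every x ∈ X^{d_i} with (φ_x)_*(u_{d_i}) ∈ O satisfies x ∈ Map_μ(ρ,F,L,δ,σ_i). -/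

import Mathlib

open MeasureTheory Filter Topology
open scoped ENNReal NNReal BigOperators Classical

namespace SoficPaper

/-- The proportion of indices `j ∈ Fin n` satisfying `P`. -/
noncomputable def prop {n : ℕ} (P : Fin n → Prop) : ℝ :=
  ((Finset.univ.filter P).card : ℝ) / n

/-- A sofic approximation of a group `G`. -/
def IsSoficApprox {G : Type*} [Group G] (d : ℕ → ℕ)
    (σ : ∀ i, G → Equiv.Perm (Fin (d i))) : Prop :=
  (∀ g h : G, Tendsto (fun i => prop fun j => σ i g (σ i h j) = σ i (g * h) j)
      atTop (nhds 1)) ∧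
  ∀ g : G, g ≠ 1 → Tendsto (fun i => prop fun j => σ i g j = j) atTop (nhds 0)

/-- The metric `ρ₂` on `X^n` associated with a pseudometric `ρ` on `X`. -/
noncomputable def rho2 {X : Type*} (ρ : X → X → ℝ) {n : ℕ} (x y : Fin n → X) : ℝ :=
  Real.sqrt ((n : ℝ)⁻¹ * ∑ j, ρ (x j) (y j) ^ 2)

/-- A continuous pseudometric. -/
structure IsCtsPseudoMetric {X : Type*} [TopologicalSpace X] (ρ : X → X → ℝ) : Prop where
  refl : ∀ x, ρ x x = 0
  symm : ∀ x y, ρ x y = ρ y x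
  triangle : ∀ x y z, ρ x z ≤ ρ x y + ρ y z
  continuous : Continuous fun p : X × X => ρ p.1 p.2

/-- A dynamically generating pseudometric. -/
def IsDynGenerating {G X : Type*} (act : G → X → X) (ρ : X → X → ℝ) : Prop :=
  ∀ x y : X, x ≠ y → ∃ g : G, 0 < ρ (act g x) (act g y)

/-- An action of `G` on `X` by homeomorphisms. -/
structure IsActionByHomeos (G X : Type*) [Group G] [TopologicalSpace X]
    (act : G → X → X) : Prop where
  one : ∀ x, act 1 x = x
  mul : ∀ g h x, act (g * h) x = act g (act h x)
  continuous : ∀ g, Continuous (act g)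

/-- An action of `G` on a topological group `X` by continuous automorphisms. -/
structure IsActionByAutomorphisms (G X : Type*) [Group G] [TopologicalSpace X] [Group X]
    (act : G → X → X) : Prop where
  one : ∀ x, act 1 x = x
  mul : ∀ g h x, act (g * h) x = act g (act h x)
  continuous : ∀ g, Continuous (act g)
  map_mul : ∀ g x y, act g (x * y) = act g x * act g y

/-- A compatible bi-invariant metric on a compact topological group: a continuous
separating pseudometric which is invariant under both left and right translations. -/
structure IsCompatBiInvMetric {X : Type*} [TopologicalSpace X] [Group X]
    (ρ : X → X → ℝ) : Prop where
  refl : ∀ x, ρ x x = 0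
  symm : ∀ x y, ρ x y = ρ y x
  triangle : ∀ x y z, ρ x z ≤ ρ x y + ρ y z
  continuous : Continuous fun p : X × X => ρ p.1 p.2
  pos : ∀ x y, x ≠ y → 0 < ρ x y
  biinv : ∀ a b x y, ρ (a * x * b) (a * y * b) = ρ x y

/-- The space `Map(ρ, F, δ, σᵢ)` of topological microstates. -/
def MapSp {G X : Type*} (act : G → X → X) (ρ : X → X → ℝ) {n : ℕ} (F : Finset G) (δ : ℝ)
    (σ : G → Equiv.Perm (Fin n)) : Set (Fin n → X) :=
  {φ | ∀ g ∈ F, rho2 ρ (fun j => act g (φ j)) (fun j => φ (σ g j)) < δ}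

/-- The space `Map_μ(ρ, F, L, δ, σᵢ)` of measure-theoretic microstates; the integral of
`f` against the empirical distribution `φ_* u_n` is written as the average `n⁻¹ ∑ j, f (φ j)`. -/
def MapMeas {G X : Type*} [TopologicalSpace X] [MeasurableSpace X]
    (act : G → X → X) (ρ : X → X → ℝ) (μ : Measure X) {n : ℕ}
    (F : Finset G) (L : Finset C(X, ℝ)) (δ : ℝ) (σ : G → Equiv.Perm (Fin n)) :
    Set (Fin n → X) :=
  {φ | φ ∈ MapSp act ρ F δ σ ∧ ∀ f ∈ L, |(n : ℝ)⁻¹ * ∑ j, f (φ j) - ∫ x, f x ∂μ| < δ}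

/-- Local and empirical convergence `μᵢ →^{le} μ`. -/
def LEconv {G X : Type*} [Group G] [TopologicalSpace X] [MeasurableSpace X]
    (d : ℕ → ℕ) (σ : ∀ i, G → Equiv.Perm (Fin (d i)))
    (act : G → X → X) (ρ : X → X → ℝ) (μ : Measure X)
    (μi : ∀ i, Measure (Fin (d i) → X)) : Prop :=
  ∀ (F : Finset G) (L : Finset C(X, ℝ)) (δ : ℝ), 0 < δ →
    Tendsto (fun i => (μi i (MapMeas act ρ μ F L δ (σ i))).toReal) atTop (nhds 1) ∧
    ∀ f ∈ L, Tendsto (fun i =>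
      prop fun j : Fin (d i) => |(∫ φ, f (φ j) ∂(μi i)) - ∫ x, f x ∂μ| < δ)
      atTop (nhds 1)

/-- The diagonal action on `X × X`. -/
def diagAct {G X : Type*} (act : G → X → X) : G → X × X → X × X :=
  fun g p => (act g p.1, act g p.2)

/-- The pseudometric `ρ̃` on `X × X` induced by `ρ`. -/
noncomputable def prodRho {X : Type*} (ρ : X → X → ℝ) : X × X → X × X → ℝ :=
  fun p q => Real.sqrt ((ρ p.1 q.1 ^ 2 + ρ p.2 q.2 ^ 2) / 2)

/-- The identification of `X^n × Y^n` with `(X × Y)^n`. -/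
def zipFun {X Y : Type*} {n : ℕ} (φ : Fin n → X) (ψ : Fin n → Y) : Fin n → X × Y :=
  fun j => (φ j, ψ j)

/-- Local and doubly empirical convergence `μᵢ →^{lde} μ`:
`μᵢ ⊗ μᵢ →^{le} μ ⊗ μ` for the diagonal action. -/
def LDEconv {G X : Type*} [Group G] [TopologicalSpace X] [MeasurableSpace X]
    (d : ℕ → ℕ) (σ : ∀ i, G → Equiv.Perm (Fin (d i)))
    (act : G → X → X) (ρ : X → X → ℝ) (μ : Measure X)
    (μi : ∀ i, Measure (Fin (d i) → X)) : Prop :=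
  LEconv d σ (diagAct act) (prodRho ρ) (μ.prod μ)
    (fun i => Measure.map (fun p : (Fin (d i) → X) × (Fin (d i) → X) => zipFun p.1 p.2)
      ((μi i).prod (μi i)))

/-- `N_ε(S, ρ)`: the maximal cardinality of an `ε`-separated subset of `S`. -/
noncomputable def sepNum {Z : Type*} (ρ : Z → Z → ℝ) (S : Set Z) (ε : ℝ) : ℝ :=
  sSup {r : ℝ | ∃ A : Finset Z, ↑A ⊆ S ∧
    (∀ x ∈ A, ∀ y ∈ A, x ≠ y → ε < ρ x y) ∧ r = (A.card : ℝ)}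

/-- Topological sofic entropy of a factor `π : X → Y` in the presence of `X`. -/
noncomputable def htopPres {G X Y : Type*} [Group G]
    (d : ℕ → ℕ) (σ : ∀ i, G → Equiv.Perm (Fin (d i)))
    (act : G → X → X) (ρX : X → X → ℝ) (π : X → Y) (ρY : Y → Y → ℝ) : EReal :=
  ⨆ ε ∈ Set.Ioi (0 : ℝ), ⨅ (F : Finset G), ⨅ δ ∈ Set.Ioi (0 : ℝ),
    Filter.limsup (fun i =>
      (((d i : ℝ)⁻¹ *
        Real.log (sepNum (rho2 ρY) ((fun φ => π ∘ φ) '' MapSp act ρX F δ (σ i)) ε) : ℝ) :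
          EReal)) atTop

/-- Measure-theoretic sofic entropy of a factor `π : X → Y` in the presence of `(X, μ)`. -/
noncomputable def hmeasPres {G X Y : Type*} [Group G] [TopologicalSpace X] [MeasurableSpace X]
    (d : ℕ → ℕ) (σ : ∀ i, G → Equiv.Perm (Fin (d i)))
    (act : G → X → X) (ρX : X → X → ℝ) (μ : Measure X) (π : X → Y) (ρY : Y → Y → ℝ) :
    EReal :=
  ⨆ ε ∈ Set.Ioi (0 : ℝ), ⨅ (F : Finset G), ⨅ (L : Finset C(X, ℝ)), ⨅ δ ∈ Set.Ioi (0 : ℝ),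
    Filter.limsup (fun i =>
      (((d i : ℝ)⁻¹ *
        Real.log (sepNum (rho2 ρY) ((fun φ => π ∘ φ) '' MapMeas act ρX μ F L δ (σ i)) ε) : ℝ) :
          EReal)) atTop

/-- Topological sofic entropy. -/
noncomputable def htop {G X : Type*} [Group G]
    (d : ℕ → ℕ) (σ : ∀ i, G → Equiv.Perm (Fin (d i)))
    (act : G → X → X) (ρ : X → X → ℝ) : EReal :=
  htopPres d σ act ρ id ρ

/-- Measure-theoretic sofic entropy. -/
noncomputable def hmeas {G X : Type*} [Group G] [TopologicalSpace X] [MeasurableSpace X]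
    (d : ℕ → ℕ) (σ : ∀ i, G → Equiv.Perm (Fin (d i)))
    (act : G → X → X) (ρ : X → X → ℝ) (μ : Measure X) : EReal :=
  hmeasPres d σ act ρ μ id ρ

/-- `S_{ε,δ}(ν, ρ)`: the smallest cardinality of a finite set whose open `ε`-neighborhood
has `ν`-measure at least `1 - δ`. -/
noncomputable def covNum {Z : Type*} [MeasurableSpace Z] (ρ : Z → Z → ℝ) (ν : Measure Z)
    (ε δ : ℝ) : ℝ :=
  sInf {r : ℝ | ∃ A : Finset Z,
    ENNReal.ofReal (1 - δ) ≤ ν {z | ∃ a ∈ A, ρ a z < ε} ∧ r = (A.card : ℝ)}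

/-- The local and doubly empirical model-measure sofic entropy `h^{lde}`. -/
noncomputable def hlde {G X : Type*} [Group G] [TopologicalSpace X] [MeasurableSpace X]
    (d : ℕ → ℕ) (σ : ∀ i, G → Equiv.Perm (Fin (d i)))
    (act : G → X → X) (ρ : X → X → ℝ) (μ : Measure X) : EReal :=
  ⨆ ε ∈ Set.Ioi (0 : ℝ), ⨆ δ ∈ Set.Ioi (0 : ℝ),
  ⨆ (s : ℕ → ℕ), ⨆ (_ : StrictMono s),
  ⨆ (ν : ∀ n, Measure (Fin (d (s n)) → X)),
  ⨆ (_ : (∀ n, IsProbabilityMeasure (ν n)) ∧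
      LDEconv (fun n => d (s n)) (fun n => σ (s n)) act ρ μ ν),
    Filter.limsup (fun n =>
      (((d (s n) : ℝ)⁻¹ * Real.log (covNum (rho2 ρ) (ν n) ε δ) : ℝ) : EReal)) atTop

/-- Local weak* convergence `μᵢ →^{lw*} μ`. -/
def LWconv {X : Type*} [TopologicalSpace X] [MeasurableSpace X] (d : ℕ → ℕ)
    (μ : Measure X) (μi : ∀ i, Measure (Fin (d i) → X)) : Prop :=
  ∀ (f : C(X, ℝ)) (δ : ℝ), 0 < δ →
    Tendsto (fun i =>
      prop fun j : Fin (d i) => |(∫ φ, f (φ j) ∂(μi i)) - ∫ x, f x ∂μ| < δ)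
      atTop (nhds 1)

/-- Ergodicity of an action with respect to a measure. -/
def ErgodicAction {G X : Type*} [MeasurableSpace X] (act : G → X → X) (μ : Measure X) :
    Prop :=
  ∀ A : Set X, MeasurableSet A → (∀ g, act g '' A = A) → μ A = 0 ∨ μ A = 1

/-- Weak mixing: ergodicity of the diagonal action on the square. -/
def WeaklyMixingAction {G X : Type*} [MeasurableSpace X] (act : G → X → X)
    (μ : Measure X) : Prop :=
  ErgodicAction (diagAct act) (μ.prod μ)

/-- The homoclinic group of an action on a compact group. -/
def homoclinic {G X : Type*} [TopologicalSpace X] [One X] (act : G → X → X) : Set X :=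
  {x | Tendsto (fun g => act g x) cofinite (nhds 1)}

/-- The left-shift action of `G` on `A^G`. -/
def shift (G A : Type*) [Group G] : G → (G → A) → (G → A) :=
  fun g x h => x (g⁻¹ * h)

/-- The map `Ψ : X → X^G`, `Ψ(x)(g) = g⁻¹ x`. -/
def PsiMap {G X : Type*} [Group G] (act : G → X → X) : X → G → X :=
  fun x g => act g⁻¹ x

/-- The map `φ_x : {1,…,dᵢ} → X^G`, `φ_x(j)(g) = x(σᵢ(g)⁻¹ j)`. -/
def phiX {G X : Type*} {n : ℕ} (σi : G → Equiv.Perm (Fin n)) (x : Fin n → X) :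
    Fin n → G → X :=
  fun j g => x ((σi g)⁻¹ j)

/-- The uniform measure on `Fin n`. -/
noncomputable def unif (n : ℕ) : Measure (Fin n) := (n : ℝ≥0∞)⁻¹ • Measure.count

lemma unif_isProb {n : ℕ} (hn : 0 < n) : IsProbabilityMeasure (unif n) := by
  constructor
  have : (Measure.count : Measure (Fin n)) Set.univ = n := by
    simp [Measure.count_univ]
  simp only [unif, Measure.smul_apply, this, smul_eq_mul]
  exact ENNReal.inv_mul_cancel (by exact_mod_cast hn.ne') (by simp)

/-- Pushforward of a probability measure along a measurable map, as a probability measure. -/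
noncomputable def pmMap {α β : Type*} [MeasurableSpace α] [MeasurableSpace β]
    (μ : Measure α) (hμ : IsProbabilityMeasure μ) {f : α → β} (hf : Measurable f) :
    ProbabilityMeasure β :=
  ⟨μ.map f, by haveI := hμ; exact Measure.isProbabilityMeasure_map hf.aemeasurable⟩

lemma measurable_of_fin {β : Type*} [MeasurableSpace β] {n : ℕ} (f : Fin n → β) :
    Measurable f := measurable_from_top

lemma measurable_phiX_coord {G X : Type*} [MeasurableSpace X] {n : ℕ}
    (σi : G → Equiv.Perm (Fin n)) (j : Fin n) :
    Measurable (fun x : Fin n → X => (fun g => x ((σi g)⁻¹ j) : G → X)) :=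
  measurable_pi_lambda _ fun _ => measurable_pi_apply _

/-- The empirical distribution of `φ : Fin n → Z`, a probability measure on `Z` (`n > 0`). -/
noncomputable def empDist {Z : Type*} [MeasurableSpace Z] {n : ℕ} (hn : 0 < n)
    (φ : Fin n → Z) : ProbabilityMeasure Z :=
  pmMap (unif n) (unif_isProb hn) (measurable_of_fin φ)

/-- Convolution of measures on a group. -/
noncomputable def mconv {X : Type*} [MeasurableSpace X] [Mul X] (μ ν : Measure X) :
    Measure X :=
  Measure.map (fun p : X × X => p.1 * p.2) (μ.prod ν)

/-- Convolution of probability measures on a compact metrizable group. -/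
noncomputable def pconv {X : Type*} [TopologicalSpace X] [MeasurableSpace X] [BorelSpace X]
    [SecondCountableTopology X] [Group X] [IsTopologicalGroup X]
    (μ ν : ProbabilityMeasure X) : ProbabilityMeasure X :=
  ⟨mconv (μ : Measure X) (ν : Measure X), by
    have hmul : Measurable fun p : X × X => p.1 * p.2 := continuous_mul.measurable
    exact Measure.isProbabilityMeasure_map hmul.aemeasurable⟩


/-- The diagonal product action of `G` on `X × Y`. -/
def prodAct {G X Y : Type*} (actX : G → X → X) (actY : G → Y → Y) : G → X × Y → X × Y :=
  fun g p => (actX g p.1, actY g p.2)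

end SoficPaper

open SoficPaper


namespace SoficPaper

lemma rho_nonneg' {X : Type*} [TopologicalSpace X] {ρ : X → X → ℝ} (hρ : IsCtsPseudoMetric ρ)
    (a b : X) : 0 ≤ ρ a b := by
  nlinarith [hρ.triangle a b a, hρ.refl a, hρ.symm a b]

lemma prop_nonneg' {n : ℕ} (P : Fin n → Prop) : 0 ≤ prop P :=
  div_nonneg (by positivity) (by positivity)

lemma prop_congr' {n : ℕ} {P Q : Fin n → Prop} (h : ∀ j, P j ↔ Q j) : prop P = prop Q := by
  unfold prop
  congr 3
  exact Finset.filter_congr fun j _ => h j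

lemma prop_add_prop_not' {n : ℕ} (hn : 0 < n) (P : Fin n → Prop) :
    prop P + prop (fun j => ¬ P j) = 1 := by
  unfold prop
  rw [← add_div, ← Nat.cast_add, Finset.card_filter_add_card_filter_not,
    Finset.card_univ, Fintype.card_fin, div_self (by exact_mod_cast hn.ne')]

lemma integral_unif' {n : ℕ} (f : Fin n → ℝ) :
    ∫ j, f j ∂(unif n) = (n : ℝ)⁻¹ * ∑ j, f j := by
  unfold unif
  rw [integral_smul_measure, integral_fintype Integrable.of_finite]
  simp [Measure.count_singleton, ENNReal.toReal_inv, Finset.mul_sum]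

lemma integral_empDist' {Z : Type*} [MeasurableSpace Z] [TopologicalSpace Z]
    [OpensMeasurableSpace Z] {n : ℕ} (hn : 0 < n) (φ : Fin n → Z)
    (h : BoundedContinuousFunction Z ℝ) :
    ∫ z, h z ∂((empDist hn φ : ProbabilityMeasure Z) : Measure Z)
      = (n : ℝ)⁻¹ * ∑ j, h (φ j) := by
  have hc : ((empDist hn φ : ProbabilityMeasure Z) : Measure Z) = (unif n).map φ := rfl
  rw [hc, integral_map (measurable_of_fin φ).aemeasurable
    h.continuous.aestronglyMeasurable, integral_unif']

lemma cont_integral_PM' {Ω : Type*} [TopologicalSpace Ω] [MeasurableSpace Ω]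
    [OpensMeasurableSpace Ω] (h : BoundedContinuousFunction Ω ℝ) :
    Continuous fun ν : MeasureTheory.ProbabilityMeasure Ω =>
      ∫ ω, h ω ∂(ν : MeasureTheory.Measure Ω) := by
  rw [continuous_iff_continuousAt]
  intro ν
  exact continuousAt_of_tendsto_nhds
    (ProbabilityMeasure.tendsto_iff_forall_integral_tendsto.mp tendsto_id h)

/-- The bounded continuous function `ω ↦ f (ω g)` on `X^G`. -/
noncomputable def evalBCF {G X : Type*} [TopologicalSpace X] [CompactSpace X]
    (f : C(X, ℝ)) (g : G) : BoundedContinuousFunction (G → X) ℝ :=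
  BoundedContinuousFunction.mkOfCompact
    ⟨fun ω => f (ω g), f.continuous.comp (continuous_apply g)⟩

/-- The bounded continuous function `ω ↦ ρ (g • ω(g), ω(1))²` on `X^G`. -/
noncomputable def rhoSqBCF {G X : Type*} [Group G] [TopologicalSpace X] [CompactSpace X]
    (act : G → X → X) (ρ : X → X → ℝ) (hρc : Continuous fun p : X × X => ρ p.1 p.2)
    (hactc : ∀ g : G, Continuous (act g)) (g : G) : BoundedContinuousFunction (G → X) ℝ :=
  BoundedContinuousFunction.mkOfCompact
    ⟨fun ω => ρ (act g (ω g)) (ω 1) ^ 2, by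
      exact (hρc.comp ((((hactc g).comp (continuous_apply g)).prodMk
        (continuous_apply 1)))).pow 2⟩

end SoficPaper

/-- Lemma 2.7(ii). Conversely, if `(φ_x)_*(u_{dᵢ})` lies in a suitable
weak* neighborhood of `Ψ_*μ`, then `x` is a measure-theoretic microstate. -/
theorem transfer_lemma_ii {G X : Type*} [Group G] [Countable G]
    [TopologicalSpace X] [CompactSpace X] [TopologicalSpace.MetrizableSpace X]
    [MeasurableSpace X] [BorelSpace X]
    (d : ℕ → ℕ) (hd : ∀ i, 0 < d i) (σ : ∀ i, G → Equiv.Perm (Fin (d i)))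
    (hσ : IsSoficApprox d σ)
    (act : G → X → X) (hact : IsActionByHomeos G X act)
    (ρ : X → X → ℝ) (hρ : IsCtsPseudoMetric ρ) (hρgen : IsDynGenerating act ρ)
    (μ : MeasureTheory.Measure X) (hμProb : MeasureTheory.IsProbabilityMeasure μ)
    (hμinv : ∀ g : G, MeasureTheory.Measure.map (act g) μ = μ)
    (hΨ : Measurable (PsiMap act)) :
    ∀ (F : Finset G) (L : Finset C(X, ℝ)) (δ : ℝ), 0 < δ →
      ∃ O : Set (MeasureTheory.ProbabilityMeasure (G → X)), IsOpen O ∧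
        pmMap μ hμProb hΨ ∈ O ∧
        ∃ I : ℕ, ∀ i ≥ I, ∀ x : Fin (d i) → X,
          empDist (hd i) (phiX (σ i) x) ∈ O → x ∈ MapMeas act ρ μ F L δ (σ i) := by
  intro F L δ hδ
  have hρ0 : ∀ a b : X, 0 ≤ ρ a b := rho_nonneg' hρ
  obtain ⟨M, hM0, hM⟩ : ∃ M : ℝ, 0 ≤ M ∧ ∀ a b : X, ρ a b ≤ M := by
    rcases isEmpty_or_nonempty X with h | h
    · exact ⟨0, le_refl _, fun a => absurd ⟨a⟩ (not_nonempty_iff.2 h)⟩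
    · obtain ⟨p, -, hp⟩ := isCompact_univ.exists_isMaxOn Set.univ_nonempty
        hρ.continuous.continuousOn
      refine ⟨ρ p.1 p.2, ?_, fun a b => hp (Set.mem_univ (a, b))⟩
      have h2 : ρ p.1 p.1 ≤ ρ p.1 p.2 := hp (Set.mem_univ (p.1, p.1))
      rw [hρ.refl] at h2; exact h2
  set η : ℝ := δ ^ 2 / (2 * (M ^ 2 + 1)) with hη
  have hηpos : 0 < η := by positivity
  set Hg : G → BoundedContinuousFunction (G → X) ℝ :=
    fun g => rhoSqBCF act ρ hρ.continuous hact.continuous g with hHg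
  set Ef : C(X, ℝ) → BoundedContinuousFunction (G → X) ℝ :=
    fun f => evalBCF f (1 : G) with hEf
  set O : Set (MeasureTheory.ProbabilityMeasure (G → X)) :=
    (⋂ f ∈ L, {ν : MeasureTheory.ProbabilityMeasure (G → X) |
        |(∫ ω, (Ef f) ω ∂(ν : Measure (G → X))) - ∫ x, f x ∂μ| < δ}) ∩
    (⋂ g ∈ F, {ν : MeasureTheory.ProbabilityMeasure (G → X) |
        (∫ ω, (Hg g) ω ∂(ν : Measure (G → X))) < δ ^ 2 / 2}) with hO
  have hOopen : IsOpen O := by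
    rw [hO]
    apply IsOpen.inter
    · apply isOpen_biInter_finset
      intro f _
      exact isOpen_Iio.preimage (((cont_integral_PM' (Ef f)).sub continuous_const).abs)
    · apply isOpen_biInter_finset
      intro g _
      exact isOpen_Iio.preimage (cont_integral_PM' (Hg g))
  have hcoe : ((pmMap μ hμProb hΨ : MeasureTheory.ProbabilityMeasure (G → X)) :
      Measure (G → X)) = μ.map (PsiMap act) := rfl
  -- integrals against the target measure
  have hEf_int : ∀ f : C(X, ℝ),
      (∫ ω, (Ef f) ω ∂(μ.map (PsiMap act))) = ∫ x, f x ∂μ := by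
    intro f
    rw [integral_map hΨ.aemeasurable (Ef f).continuous.aestronglyMeasurable]
    refine integral_congr_ae (Filter.Eventually.of_forall fun x => ?_)
    simp [hEf, evalBCF, PsiMap, inv_one, hact.one]
  have hH_int : ∀ g : G, (∫ ω, (Hg g) ω ∂(μ.map (PsiMap act))) = 0 := by
    intro g
    rw [integral_map hΨ.aemeasurable (Hg g).continuous.aestronglyMeasurable]
    have hz : ∀ x : X, (Hg g) (PsiMap act x) = 0 := by
      intro x
      have h1 : act g (PsiMap act x g) = x := by
        show act g (act g⁻¹ x) = x
        rw [← hact.mul, mul_inv_cancel, hact.one]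
      have h2 : PsiMap act x 1 = x := by
        show act (1 : G)⁻¹ x = x
        rw [inv_one, hact.one]
      simp [hHg, rhoSqBCF, h1, h2, hρ.refl]
    simp only [hz, integral_zero]
  -- sofic condition for the identity
  have hfix : Tendsto (fun i => prop fun j : Fin (d i) => σ i 1 j = j) atTop (nhds 1) := by
    have h11 := hσ.1 1 1
    have heq : ∀ i, (prop fun j : Fin (d i) => σ i 1 (σ i 1 j) = σ i (1 * 1) j)
        = prop fun j : Fin (d i) => σ i 1 j = j := by
      intro i
      apply prop_congr'
      intro j
      rw [one_mul]
      constructor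
      · intro h; exact (σ i 1).injective h
      · intro h; simp [h]
    simp only [heq] at h11
    exact h11
  have hev : ∀ᶠ i in atTop, 1 - η < prop fun j : Fin (d i) => σ i 1 j = j :=
    hfix.eventually (eventually_gt_nhds (by linarith))
  obtain ⟨I, hI⟩ := eventually_atTop.mp hev
  refine ⟨O, hOopen, ?_, I, ?_⟩
  · rw [hO, Set.mem_inter_iff]
    constructor
    · refine Set.mem_iInter₂.2 fun f _ => ?_
      simp only [Set.mem_setOf_eq, hcoe, hEf_int f]
      simpa using hδ
    · refine Set.mem_iInter₂.2 fun g _ => ?_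
      simp only [Set.mem_setOf_eq, hcoe, hH_int g]
      positivity
  · intro i hi x hx
    rw [hO, Set.mem_inter_iff] at hx
    obtain ⟨hx1, hx2⟩ := hx
    have hdi : (0 : ℝ) < (d i : ℝ) := by exact_mod_cast hd i
    refine ⟨fun g hgF => ?_, fun f hfL => ?_⟩
    · -- topological microstate condition
      have hxg := Set.mem_iInter₂.1 hx2 g hgF
      simp only [Set.mem_setOf_eq] at hxg
      rw [integral_empDist' (hd i)] at hxg
      have hxg' : (d i : ℝ)⁻¹ *
          ∑ j, ρ (act g (x ((σ i g)⁻¹ j))) (x ((σ i 1)⁻¹ j)) ^ 2 < δ ^ 2 / 2 := by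
        have hb : ∀ j : Fin (d i), (Hg g) (phiX (σ i) x j)
            = ρ (act g (x ((σ i g)⁻¹ j))) (x ((σ i 1)⁻¹ j)) ^ 2 := by
          intro j
          simp [hHg, rhoSqBCF, phiX]
        rw [Finset.sum_congr rfl (fun j _ => hb j)] at hxg
        exact hxg
      have hbad : SoficPaper.prop (fun j : Fin (d i) => ¬ σ i 1 j = j) < η := by
        have h1 := hI i hi
        have h2 := prop_add_prop_not' (hd i) (fun j : Fin (d i) => σ i 1 j = j)
        linarith
      have hterm : ∀ j : Fin (d i),
          ρ (act g (x ((σ i g)⁻¹ j))) (x j) ^ 2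
            ≤ ρ (act g (x ((σ i g)⁻¹ j))) (x ((σ i 1)⁻¹ j)) ^ 2
              + (if σ i 1 j = j then 0 else M ^ 2) := by
        intro j
        by_cases h : σ i 1 j = j
        · have hinv : ((σ i 1)⁻¹ : Equiv.Perm (Fin (d i))) j = j := by
            conv_lhs => rw [← h]
            exact (σ i 1).symm_apply_apply _
          rw [if_pos h, hinv, add_zero]
        · rw [if_neg h]
          have hb1 := hρ0 (act g (x ((σ i g)⁻¹ j))) (x j)
          have hb2 := hM (act g (x ((σ i g)⁻¹ j))) (x j)
          nlinarith [sq_nonneg (ρ (act g (x ((σ i g)⁻¹ j))) (x ((σ i 1)⁻¹ j)))]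
      have hsum : ∑ j, ρ (act g (x j)) (x (σ i g j)) ^ 2
          = ∑ j, ρ (act g (x ((σ i g)⁻¹ j))) (x j) ^ 2 := by
        rw [← Equiv.sum_comp (σ i g) (fun j => ρ (act g (x ((σ i g)⁻¹ j))) (x j) ^ 2)]
        exact Finset.sum_congr rfl fun j _ => by simp
      have hcard : ∑ j : Fin (d i), (if σ i 1 j = j then (0 : ℝ) else M ^ 2)
          = ((Finset.univ.filter (fun j : Fin (d i) => ¬ σ i 1 j = j)).card : ℝ) * M ^ 2 := by
        rw [Finset.sum_ite, Finset.sum_const_zero, Finset.sum_const, zero_add, nsmul_eq_mul]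
      have hsum_le : ∑ j, ρ (act g (x ((σ i g)⁻¹ j))) (x j) ^ 2
          ≤ (∑ j, ρ (act g (x ((σ i g)⁻¹ j))) (x ((σ i 1)⁻¹ j)) ^ 2)
            + ((Finset.univ.filter (fun j : Fin (d i) => ¬ σ i 1 j = j)).card : ℝ) * M ^ 2 := by
        calc ∑ j, ρ (act g (x ((σ i g)⁻¹ j))) (x j) ^ 2
            ≤ ∑ j, (ρ (act g (x ((σ i g)⁻¹ j))) (x ((σ i 1)⁻¹ j)) ^ 2
                + (if σ i 1 j = j then 0 else M ^ 2)) :=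
              Finset.sum_le_sum fun j _ => hterm j
          _ = _ := by rw [Finset.sum_add_distrib, hcard]
      have hpropeq : (d i : ℝ)⁻¹ *
          (((Finset.univ.filter (fun j : Fin (d i) => ¬ σ i 1 j = j)).card : ℝ) * M ^ 2)
          = SoficPaper.prop (fun j : Fin (d i) => ¬ σ i 1 j = j) * M ^ 2 := by
        unfold SoficPaper.prop
        rw [div_eq_inv_mul, mul_assoc]
        congr!
      have hetaM : η * M ^ 2 ≤ δ ^ 2 / 2 := by
        rw [hη, div_mul_eq_mul_div, div_le_div_iff₀ (by positivity) (by positivity)]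
        nlinarith [sq_nonneg δ, sq_nonneg M]
      have hbadM : (d i : ℝ)⁻¹ *
          (((Finset.univ.filter (fun j : Fin (d i) => ¬ σ i 1 j = j)).card : ℝ) * M ^ 2)
          ≤ δ ^ 2 / 2 := by
        rw [hpropeq]
        calc SoficPaper.prop (fun j : Fin (d i) => ¬ σ i 1 j = j) * M ^ 2
            ≤ η * M ^ 2 := mul_le_mul_of_nonneg_right hbad.le (sq_nonneg M)
          _ ≤ δ ^ 2 / 2 := hetaM
      have hfinal : (d i : ℝ)⁻¹ * ∑ j, ρ (act g (x j)) (x (σ i g j)) ^ 2 < δ ^ 2 := by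
        calc (d i : ℝ)⁻¹ * ∑ j, ρ (act g (x j)) (x (σ i g j)) ^ 2
            = (d i : ℝ)⁻¹ * ∑ j, ρ (act g (x ((σ i g)⁻¹ j))) (x j) ^ 2 := by rw [hsum]
          _ ≤ (d i : ℝ)⁻¹ * ((∑ j, ρ (act g (x ((σ i g)⁻¹ j))) (x ((σ i 1)⁻¹ j)) ^ 2)
              + ((Finset.univ.filter (fun j : Fin (d i) => ¬ σ i 1 j = j)).card : ℝ) * M ^ 2) :=
              mul_le_mul_of_nonneg_left hsum_le (by positivity)
          _ = (d i : ℝ)⁻¹ * (∑ j, ρ (act g (x ((σ i g)⁻¹ j))) (x ((σ i 1)⁻¹ j)) ^ 2)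
              + (d i : ℝ)⁻¹ * (((Finset.univ.filter
                  (fun j : Fin (d i) => ¬ σ i 1 j = j)).card : ℝ) * M ^ 2) := by ring
          _ < δ ^ 2 / 2 + δ ^ 2 / 2 := add_lt_add_of_lt_of_le hxg' hbadM
          _ = δ ^ 2 := by ring
      show rho2 ρ (fun j => act g (x j)) (fun j => x (σ i g j)) < δ
      rw [rho2, Real.sqrt_lt' hδ]
      exact hfinal
    · -- empirical distribution condition
      have hxf := Set.mem_iInter₂.1 hx1 f hfL
      simp only [Set.mem_setOf_eq] at hxf
      rw [integral_empDist' (hd i)] at hxf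
      have hb : ∑ j, (Ef f) (phiX (σ i) x j) = ∑ j, f (x j) := by
        have hc := Equiv.sum_comp ((σ i 1)⁻¹ : Equiv.Perm (Fin (d i))) (fun j => f (x j))
        calc ∑ j, (Ef f) (phiX (σ i) x j)
            = ∑ j, f (x ((σ i 1)⁻¹ j)) := by
              refine Finset.sum_congr rfl fun j _ => ?_
              simp [hEf, evalBCF, phiX]
          _ = ∑ j, f (x j) := hc
      rwa [hb] at hxf
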